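/- For every m ∈ ℝ, σ > 0, x ∈ ℝ and every u > 0, the function u ↦ Φ((x+mu)/(σ√u)) − exp(−2mx/σ²)·Φ((−x+mu)/(σ√u)) is differentiable on (0,∞) and its derivative at u equals −(x/(σ·u^{3/2}))·φ((x+mu)/(σ√u)). Equivalently, ∂/∂u (1 − π(u,x)) = −(x/(σ·u^{3/2}))·φ((x+mu)/(σ√u)). -/

import Mathlib

open MeasureTheory Real Set

/-- The standard normal density. -/
noncomputable def phi (x : ℝ) : ℝ := (Real.sqrt (2 * Real.pi))⁻¹ * Real.exp (-x ^ 2 / 2)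

/-- The standard normal cumulative distribution function. -/
noncomputable def Phi (x : ℝ) : ℝ := ∫ u in Set.Iio x, phi u

lemma continuous_phi : Continuous phi := by
  unfold phi
  exact continuous_const.mul (Real.continuous_exp.comp (by continuity))

lemma integrable_phi : Integrable phi := by
  have h : Integrable (fun u : ℝ => Real.exp (-(1/2 : ℝ) * u ^ 2)) :=
    integrable_exp_neg_mul_sq (by norm_num)
  have := h.const_mul (Real.sqrt (2 * Real.pi))⁻¹
  refine this.congr ?_
  filter_upwards with u
  unfold phi
  ring_nf

lemma hasDerivAt_Phi (y : ℝ) : HasDerivAt Phi (phi y) y := by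
  have hint : Integrable phi := integrable_phi
  have hPhi : ∀ z : ℝ, Phi z = (∫ t in Iic (0:ℝ), phi t) + ∫ t in (0:ℝ)..z, phi t := by
    intro z
    have h1 : Phi z = ∫ t in Iic z, phi t := by
      unfold Phi
      exact setIntegral_congr_set Iio_ae_eq_Iic
    rw [h1, ← intervalIntegral.integral_Iic_sub_Iic (hint.integrableOn) (hint.integrableOn)]
    ring
  have hD : HasDerivAt (fun z : ℝ => (∫ t in Iic (0:ℝ), phi t) + ∫ t in (0:ℝ)..z, phi t)
      (phi y) y := by
    refine HasDerivAt.const_add _ ?_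
    exact intervalIntegral.integral_hasDerivAt_right (hint.intervalIntegrable)
      (continuous_phi.stronglyMeasurableAtFilter _ _) continuous_phi.continuousAt
  have : Phi = fun z : ℝ => (∫ t in Iic (0:ℝ), phi t) + ∫ t in (0:ℝ)..z, phi t :=
    funext hPhi
  rw [this]
  exact hD

theorem stmt_0 (m σ x : ℝ) (hσ : 0 < σ) :
    ∀ u : ℝ, 0 < u →
      HasDerivAt (fun s : ℝ =>
          Phi ((x + m * s) / (σ * Real.sqrt s)) -
            Real.exp (-2 * m * x / σ ^ 2) * Phi ((-x + m * s) / (σ * Real.sqrt s)))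
        (-(x / (σ * u ^ ((3 : ℝ) / 2))) * phi ((x + m * u) / (σ * Real.sqrt u))) u := by
  intro u hu
  have hru : 0 < Real.sqrt u := Real.sqrt_pos.mpr hu
  have hrne : Real.sqrt u ≠ 0 := ne_of_gt hru
  have hσne : σ ≠ 0 := ne_of_gt hσ
  have hdenne : σ * Real.sqrt u ≠ 0 := mul_ne_zero hσne hrne
  have hden : HasDerivAt (fun s : ℝ => σ * Real.sqrt s) (σ * (1 / (2 * Real.sqrt u))) u :=
    (Real.hasDerivAt_sqrt (ne_of_gt hu)).const_mul σ
  have hnum1 : HasDerivAt (fun s : ℝ => x + m * s) m u := by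
    simpa using ((hasDerivAt_id u).const_mul m).const_add x
  have hnum2 : HasDerivAt (fun s : ℝ => -x + m * s) m u := by
    simpa using ((hasDerivAt_id u).const_mul m).const_add (-x)
  have ha : HasDerivAt (fun s : ℝ => (x + m * s) / (σ * Real.sqrt s))
      ((m * (σ * Real.sqrt u) - (x + m * u) * (σ * (1 / (2 * Real.sqrt u)))) /
        (σ * Real.sqrt u) ^ 2) u := hnum1.div hden hdenne
  have hb : HasDerivAt (fun s : ℝ => (-x + m * s) / (σ * Real.sqrt s))
      ((m * (σ * Real.sqrt u) - (-x + m * u) * (σ * (1 / (2 * Real.sqrt u)))) /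
        (σ * Real.sqrt u) ^ 2) u := hnum2.div hden hdenne
  have hA := (hasDerivAt_Phi ((x + m * u) / (σ * Real.sqrt u))).comp u ha
  have hB := (hasDerivAt_Phi ((-x + m * u) / (σ * Real.sqrt u))).comp u hb
  have hcomb := hA.sub (hB.const_mul (Real.exp (-2 * m * x / σ ^ 2)))
  convert hcomb using 1
  case e'_4 => rfl
  case e'_5 => rfl
  case e'_8 => rfl
  -- key density identity
  have hsq : Real.sqrt u ^ 2 = u := Real.sq_sqrt hu.le
  have key : Real.exp (-2 * m * x / σ ^ 2) * phi ((-x + m * u) / (σ * Real.sqrt u))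
      = phi ((x + m * u) / (σ * Real.sqrt u)) := by
    unfold phi
    rw [mul_left_comm, ← Real.exp_add]
    congr 2
    rw [div_pow, div_pow, mul_pow, hsq]
    field_simp
    ring
  have h32 : u ^ ((3 : ℝ) / 2) = u * Real.sqrt u := by
    rw [show (3 : ℝ) / 2 = (1 : ℝ) + 1 / 2 by norm_num, Real.rpow_add hu, Real.rpow_one,
      ← Real.sqrt_eq_rpow]
  rw [← key, h32]
  set r := Real.sqrt u with hrdef
  rw [show u = r ^ 2 from hsq.symm]
  field_simp
  ring
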